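/- Let A ∈ ℝ^{m×n} preserve Chebyshev systems and v ∈ ℝⁿ be Chebyshev; set u = φ(A,v) and ṽ = ψ(A,u). If ‖A - u vᵀ‖_C = ‖A - u ṽᵀ‖_C, then T(A,u,ṽ) ⊆ T(A,u,v), and moreover j ∈ C(A,u,ṽ) if and only if j ∈ C(A,u,v) and vⱼ = ṽⱼ. -/
import Mathlib


open Filter

/-- A vector is Chebyshev if all of its components are non-zero. -/
def Cheb {n : ℕ} (v : Fin n → ℝ) : Prop := ∀ i, v i ≠ 0

/-- `mu a v` is the (unique, when `v` is Chebyshev) minimizer of `u ↦ ‖a - u • v‖`,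
where `‖·‖` is the sup-norm on `Fin n → ℝ`. -/
noncomputable def mu {n : ℕ} (a v : Fin n → ℝ) : ℝ :=
  Classical.epsilon fun t : ℝ => ∀ u : ℝ, ‖a - t • v‖ ≤ ‖a - u • v‖

noncomputable def phi {m n : ℕ} (A : Fin m → Fin n → ℝ) (v : Fin n → ℝ) : Fin m → ℝ :=
  fun i => mu (A i) v

noncomputable def psi {m n : ℕ} (A : Fin m → Fin n → ℝ) (u : Fin m → ℝ) : Fin n → ℝ :=
  fun j => mu (fun i => A i j) u

/-- `A` preserves Chebyshev systems. -/
def PreservesCheb {m n : ℕ} (A : Fin m → Fin n → ℝ) : Prop :=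
  (∀ v : Fin n → ℝ, Cheb v → Cheb (phi A v)) ∧ (∀ u : Fin m → ℝ, Cheb u → Cheb (psi A u))

/-- A vector is alternance-free if exactly one component attains the max absolute value. -/
def AlternanceFree {n : ℕ} (a : Fin n → ℝ) : Prop := ∃! i, |a i| = ‖a‖

/-- Chebyshev norm of the residual `A - u vᵀ`. -/
noncomputable def Cerr {m n : ℕ} (A : Fin m → Fin n → ℝ) (u : Fin m → ℝ) (v : Fin n → ℝ) : ℝ :=
  ⨆ i, ⨆ j, |A i j - u i * v j|

/-- Chebyshev norm of a matrix. -/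
noncomputable def CnormM {m n : ℕ} (A : Fin m → Fin n → ℝ) : ℝ :=
  ⨆ i, ⨆ j, |A i j|

/-- The sequence `v⁽ᵏ⁾` of the alternating minimization method started at `v0`. -/
noncomputable def vseq {m n : ℕ} (A : Fin m → Fin n → ℝ) (v0 : Fin n → ℝ) : ℕ → Fin n → ℝ
  | 0 => v0
  | k + 1 => psi A (phi A (vseq A v0 k))

/-- The set of positions where the residual attains its maximum absolute value. -/
noncomputable def TSet {m n : ℕ} (A : Fin m → Fin n → ℝ) (u : Fin m → ℝ) (v : Fin n → ℝ) :
    Set (Fin m × Fin n) :=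
  {p | |A p.1 p.2 - u p.1 * v p.2| = Cerr A u v}

/-- The set of columns containing a maximal-residual position. -/
noncomputable def CSet {m n : ℕ} (A : Fin m → Fin n → ℝ) (u : Fin m → ℝ) (v : Fin n → ℝ) :
    Set (Fin n) :=
  {j | ∃ i, (i, j) ∈ TSet A u v}

lemma mu_spec {k : ℕ} (a v : Fin k → ℝ) (t : ℝ) : ‖a - mu a v • v‖ ≤ ‖a - t • v‖ := by
  have hex : ∃ t0 : ℝ, ∀ s : ℝ, ‖a - t0 • v‖ ≤ ‖a - s • v‖ := by
    by_cases hv : v = 0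
    · exact ⟨0, fun s => by simp [hv]⟩
    · have hvn : 0 < ‖v‖ := norm_pos_iff.mpr hv
      set R : ℝ := (2 * ‖a‖ + 1) / ‖v‖ with hR
      have hR0 : 0 ≤ R := by positivity
      have hcont : Continuous fun s : ℝ => ‖a - s • v‖ :=
        (continuous_const.sub (continuous_id.smul continuous_const)).norm
      obtain ⟨t0, ht0mem, ht0⟩ := (isCompact_Icc (a := -R) (b := R)).exists_isMinOn
        (Set.nonempty_Icc.mpr (by linarith)) hcont.continuousOn
      refine ⟨t0, fun s => ?_⟩
      by_cases hs : s ∈ Set.Icc (-R) R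
      · exact ht0 hs
      · have hs' : R < |s| := by
          simp only [Set.mem_Icc, not_and_or, not_le] at hs
          rcases hs with h | h
          · calc R < -s := by linarith
            _ ≤ |s| := neg_le_abs s
          · exact lt_of_lt_of_le h (le_abs_self s)
        have h1 : ‖a - t0 • v‖ ≤ ‖a - (0:ℝ) • v‖ := ht0 ⟨by linarith, hR0⟩
        have h2 : ‖a‖ ≤ ‖a - s • v‖ := by
          have hb : ‖s • v‖ - ‖a‖ ≤ ‖a - s • v‖ := by
            calc ‖s • v‖ - ‖a‖ ≤ ‖s • v - a‖ := norm_sub_norm_le _ _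
            _ = ‖a - s • v‖ := norm_sub_rev _ _
          have hsn : ‖s • v‖ = |s| * ‖v‖ := by rw [norm_smul, Real.norm_eq_abs]
          have hlt : 2 * ‖a‖ + 1 < |s| * ‖v‖ := by
            calc 2 * ‖a‖ + 1 = R * ‖v‖ := by rw [hR]; field_simp
            _ < |s| * ‖v‖ := mul_lt_mul_of_pos_right hs' hvn
          linarith [hb, hsn ▸ hb]
        calc ‖a - t0 • v‖ ≤ ‖a‖ := by simpa using h1
        _ ≤ ‖a - s • v‖ := h2
  exact Classical.epsilon_spec hex t

lemma mu_unique {k : ℕ} [NeZero k] {a v : Fin k → ℝ} (hv : Cheb v) {t t' : ℝ}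
    (hmin : ∀ s : ℝ, ‖a - t • v‖ ≤ ‖a - s • v‖)
    (heq : ‖a - t' • v‖ = ‖a - t • v‖) : t' = t := by
  set M := ‖a - t • v‖ with hM
  have hmid : ‖a - ((t + t') / 2) • v‖ = M := by
    apply le_antisymm
    · have hx : a - ((t + t') / 2) • v = (1/2 : ℝ) • ((a - t • v) + (a - t' • v)) := by
        ext i; simp [smul_eq_mul]; ring
      rw [hx, norm_smul]
      have := norm_add_le (a - t • v) (a - t' • v)
      rw [Real.norm_eq_abs]
      rw [heq] at this
      calc |(1/2 : ℝ)| * ‖(a - t • v) + (a - t' • v)‖ ≤ (1/2) * (M + M) := by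
            rw [abs_of_pos (by norm_num : (0:ℝ) < 1/2)]
            nlinarith [norm_nonneg ((a - t • v) + (a - t' • v))]
      _ = M := by ring
    · exact hmin _
  obtain ⟨i, hi⟩ : ∃ i, ‖a - ((t + t') / 2) • v‖ = |(a - ((t + t') / 2) • v) i| := by
    obtain ⟨i, hmax⟩ := Finite.exists_max (fun i => |(a - ((t + t') / 2) • v) i|)
    refine ⟨i, le_antisymm ?_ ?_⟩
    · exact (pi_norm_le_iff_of_nonneg (abs_nonneg _)).mpr fun j => by
        simpa [Real.norm_eq_abs] using hmax j
    · simpa [Real.norm_eq_abs] using norm_le_pi_norm (a - ((t + t') / 2) • v) i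
  have hp : |a i - t * v i| ≤ M := by
    simpa [Real.norm_eq_abs, smul_eq_mul] using norm_le_pi_norm (a - t • v) i
  have hq : |a i - t' * v i| ≤ M := by
    have := norm_le_pi_norm (a - t' • v) i
    rw [heq] at this
    simpa [Real.norm_eq_abs, smul_eq_mul] using this
  have hm : |(a i - t * v i + (a i - t' * v i)) / 2| = M := by
    rw [← hmid, hi]
    congr 1
    simp only [Pi.sub_apply, Pi.smul_apply, smul_eq_mul]
    ring
  have key : ∀ p q N : ℝ, |p| ≤ N → |q| ≤ N → |(p + q) / 2| = N → p = q := by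
    intro p q N hp hq hm
    rcases abs_cases p with ⟨h1, h1'⟩ | ⟨h1, h1'⟩ <;>
      rcases abs_cases q with ⟨h2, h2'⟩ | ⟨h2, h2'⟩ <;>
        rcases abs_cases ((p + q) / 2) with ⟨h3, h3'⟩ | ⟨h3, h3'⟩ <;> linarith
  have hpq : a i - t * v i = a i - t' * v i := key _ _ _ hp hq hm
  have : t * v i = t' * v i := by linarith
  exact (mul_right_cancel₀ (hv i) this).symm


private lemma le_Cerr' {m n : ℕ} (A : Fin m → Fin n → ℝ) (u : Fin m → ℝ) (x : Fin n → ℝ)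
    (i : Fin m) (j : Fin n) : |A i j - u i * x j| ≤ Cerr A u x := by
  have h1 : |A i j - u i * x j| ≤ ⨆ j', |A i j' - u i * x j'| :=
    le_ciSup (f := fun j' => |A i j' - u i * x j'|) (Set.finite_range _).bddAbove j
  have h2 : (⨆ j', |A i j' - u i * x j'|) ≤ ⨆ i', ⨆ j', |A i' j' - u i' * x j'| :=
    le_ciSup (f := fun i' => ⨆ j', |A i' j' - u i' * x j'|) (Set.finite_range _).bddAbove i
  exact h1.trans h2

theorem stmt16 {m n : ℕ} (hm : 2 ≤ m) (hn : 2 ≤ n) (A : Fin m → Fin n → ℝ)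
    (hA : PreservesCheb A) (v : Fin n → ℝ) (hv : Cheb v)
    (u : Fin m → ℝ) (hu : u = phi A v) (w : Fin n → ℝ) (hw : w = psi A u)
    (h : Cerr A u v = Cerr A u w) :
    TSet A u w ⊆ TSet A u v ∧
      ∀ j, j ∈ CSet A u w ↔ j ∈ CSet A u v ∧ v j = w j := by
  haveI : NeZero m := ⟨by omega⟩
  haveI : NeZero n := ⟨by omega⟩
  have hcu : Cheb u := hu ▸ hA.1 v hv
  have i0 : Fin m := ⟨0, by omega⟩
  have j0 : Fin n := ⟨0, by omega⟩
  have hE0 : 0 ≤ Cerr A u v := (abs_nonneg _).trans (le_Cerr' A u v i0 j0)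
  -- column residual norms
  have hnorm_le : ∀ (x : Fin n → ℝ) (j : Fin n),
      ‖(fun i => A i j) - x j • u‖ ≤ Cerr A u x := by
    intro x j
    have h0 : 0 ≤ Cerr A u x := (abs_nonneg _).trans (le_Cerr' A u x i0 j)
    refine (pi_norm_le_iff_of_nonneg h0).mpr fun i => ?_
    have : A i j - x j * u i = A i j - u i * x j := by ring
    simpa [Real.norm_eq_abs, this] using le_Cerr' A u x i j
  have hwmin : ∀ (j : Fin n) (t : ℝ),
      ‖(fun i => A i j) - w j • u‖ ≤ ‖(fun i => A i j) - t • u‖ := by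
    intro j t
    rw [hw]
    exact mu_spec (fun i => A i j) u t
  -- key claim
  have key : ∀ p : Fin m × Fin n, p ∈ TSet A u w → p ∈ TSet A u v ∧ v p.2 = w p.2 := by
    rintro ⟨i, j⟩ hp
    have hp' : |A i j - u i * w j| = Cerr A u v := by
      rw [h]; exact hp
    have h1 : Cerr A u v ≤ ‖(fun i' => A i' j) - w j • u‖ := by
      rw [← hp']
      have := norm_le_pi_norm ((fun i' => A i' j) - w j • u) i
      have heq : A i j - w j * u i = A i j - u i * w j := by ring
      simpa [Real.norm_eq_abs, heq] using this
    have h2 : ‖(fun i' => A i' j) - w j • u‖ ≤ ‖(fun i' => A i' j) - v j • u‖ := hwmin j (v j)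
    have h3 : ‖(fun i' => A i' j) - v j • u‖ ≤ Cerr A u v := hnorm_le v j
    have heqn : ‖(fun i' => A i' j) - v j • u‖ = ‖(fun i' => A i' j) - w j • u‖ :=
      le_antisymm (by linarith) h2
    have hvw : v j = w j := mu_unique hcu (hwmin j) heqn
    refine ⟨?_, hvw⟩
    show |A i j - u i * v j| = Cerr A u v
    rw [hvw]; exact hp'
  refine ⟨fun p hp => (key p hp).1, fun j => ?_⟩
  constructor
  · rintro ⟨i, hi⟩
    exact ⟨⟨i, (key _ hi).1⟩, (key _ hi).2⟩
  · rintro ⟨⟨i, hi⟩, hvw⟩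
    refine ⟨i, ?_⟩
    show |A i j - u i * w j| = Cerr A u w
    rw [← hvw, ← h]
    exact hi
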